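/- For every m ∈ ℕ, the map S_m : M₂(ℂ) → M_{m+1}(ℂ) is multiplicative: S_m(1) = 1 and S_m(A·B) = S_m(A)·S_m(B) for all 2×2 complex matrices A and B; that is, S_m is a monoid homomorphism from 2×2 complex matrices to (m+1)×(m+1) complex matrices. -/
import Mathlib


open Matrix BigOperators

noncomputable section

/-- The matrix `S_m(A)` of the `m`-th symmetric power representation of `GL(2)`. -/
def Sm (m : ℕ) (A : Matrix (Fin 2) (Fin 2) ℂ) :
    Matrix (Fin (m + 1)) (Fin (m + 1)) ℂ :=
  Matrix.of fun k j =>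
    (Real.sqrt ((Nat.factorial (k : ℕ) * Nat.factorial (m - (k : ℕ)) : ℝ) /
        (Nat.factorial (j : ℕ) * Nat.factorial (m - (j : ℕ)))) : ℂ) *
    ∑ p ∈ Finset.Icc ((k : ℕ) - (m - (j : ℕ))) (min (k : ℕ) (j : ℕ)),
      (Nat.choose (j : ℕ) p : ℂ) * (Nat.choose (m - (j : ℕ)) ((k : ℕ) - p) : ℂ) *
        A 0 0 ^ p * A 1 0 ^ ((j : ℕ) - p) * A 0 1 ^ ((k : ℕ) - p) *
        A 1 1 ^ ((m - (j : ℕ)) - ((k : ℕ) - p))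

namespace SmAux
open MvPolynomial Finset

def T (m : ℕ) (A : Matrix (Fin 2) (Fin 2) ℂ) (k j : ℕ) : ℂ :=
  ∑ p ∈ Finset.Icc (k - (m - j)) (min k j),
    (Nat.choose j p : ℂ) * (Nat.choose (m - j) (k - p) : ℂ) *
      A 0 0 ^ p * A 1 0 ^ (j - p) * A 0 1 ^ (k - p) * A 1 1 ^ ((m - j) - (k - p))

def fA (A : Matrix (Fin 2) (Fin 2) ℂ) : Fin 2 → MvPolynomial (Fin 2) ℂ :=
  fun i => C (A 0 i) * X 0 + C (A 1 i) * X 1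

def D (m k : ℕ) : Fin 2 →₀ ℕ := Finsupp.single 0 k + Finsupp.single 1 (m - k)

lemma mono_eq (k l : ℕ) (c : ℂ) :
    monomial (Finsupp.single (0 : Fin 2) k + Finsupp.single 1 l) c =
      C c * X 0 ^ k * X 1 ^ l := by
  rw [X_pow_eq_monomial, X_pow_eq_monomial, mul_assoc, monomial_mul, C_mul_monomial]
  norm_num

lemma bind_fA (A B : Matrix (Fin 2) (Fin 2) ℂ) (i : Fin 2) :
    bind₁ (fA A) (fA B i) = fA (A * B) i := by
  simp only [fA, map_add, _root_.map_mul, bind₁_X_right, bind₁_C_right, Matrix.mul_apply,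
    Fin.sum_univ_two, map_add, C_mul]
  ring

lemma D_inj {m i k : ℕ} (h : D m i = D m k) : i = k := by
  have := congrArg (fun s => s 0) h
  simpa [D, Finsupp.single_apply] using this

lemma expand (m : ℕ) (A : Matrix (Fin 2) (Fin 2) ℂ) {j : ℕ} (hj : j ≤ m) :
    (fA A 0) ^ j * (fA A 1) ^ (m - j) =
      ∑ k ∈ range (m + 1), monomial (D m k) (T m A k j) := by
  simp only [T, map_sum]
  rw [Finset.sum_sigma' (range (m + 1)) (fun k => Finset.Icc (k - (m - j)) (min k j))]
  simp only [fA, add_pow, Finset.sum_mul_sum]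
  rw [Finset.sum_sigma' (range (j + 1)) (fun _ => range (m - j + 1))]
  refine Finset.sum_nbij' (fun x => ⟨x.1 + x.2, x.1⟩) (fun x => ⟨x.2, x.1 - x.2⟩) ?_ ?_ ?_ ?_ ?_
  · rintro ⟨p, q⟩ h
    simp only [mem_sigma, mem_range, mem_Icc] at h ⊢
    omega
  · rintro ⟨k, p⟩ h
    simp only [mem_sigma, mem_range, mem_Icc] at h ⊢
    omega
  · rintro ⟨p, q⟩ h
    simp only [mem_sigma, mem_range] at h
    simp only [Nat.add_sub_cancel_left]
  · rintro ⟨k, p⟩ h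
    simp only [mem_sigma, mem_range, mem_Icc] at h
    simp only []
    congr 1 <;> omega
  · rintro ⟨p, q⟩ h
    simp only [mem_sigma, mem_range] at h
    obtain ⟨hp, hq⟩ := h
    replace hp : p ≤ j := by omega
    replace hq : q ≤ m - j := by omega
    simp only [D]
    rw [mono_eq, show p + q - p = q from by omega,
      show (m - j) - q = m - j - q from rfl,
      show m - (p + q) = (j - p) + (m - j - q) from by omega, pow_add]
    simp only [_root_.map_mul, map_pow, map_natCast]
    ring

lemma extract {m : ℕ} {c c' : ℕ → ℂ}
    (h : ∑ k ∈ range (m + 1), monomial (D m k) (c k)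
       = ∑ k ∈ range (m + 1), monomial (D m k) (c' k))
    {k : ℕ} (hk : k ≤ m) : c k = c' k := by
  have key : ∀ c : ℕ → ℂ,
      MvPolynomial.coeff (D m k) (∑ i ∈ range (m + 1), monomial (D m i) (c i)) = c k := by
    intro c
    rw [MvPolynomial.coeff_sum, Finset.sum_eq_single k]
    · simp [coeff_monomial]
    · intro i _ hik; rw [coeff_monomial, if_neg (fun hD => hik (D_inj hD))]
    · intro hk'; exact absurd (mem_range.mpr (by omega)) hk'
  have h2 := congrArg (MvPolynomial.coeff (D m k)) h
  rwa [key, key] at h2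

lemma T_mul (m : ℕ) (A B : Matrix (Fin 2) (Fin 2) ℂ) {k j : ℕ} (hk : k ≤ m) (hj : j ≤ m) :
    T m (A * B) k j = ∑ i ∈ range (m + 1), T m A k i * T m B i j := by
  have h1 : ∑ i ∈ range (m + 1), monomial (D m i) (T m (A * B) i j)
      = ∑ i ∈ range (m + 1), monomial (D m i) (∑ l ∈ range (m + 1), T m A i l * T m B l j) := by
    calc ∑ i ∈ range (m + 1), monomial (D m i) (T m (A * B) i j)
        = (fA (A * B) 0) ^ j * (fA (A * B) 1) ^ (m - j) := (expand m (A * B) hj).symm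
      _ = bind₁ (fA A) ((fA B 0) ^ j * (fA B 1) ^ (m - j)) := by
          rw [_root_.map_mul, map_pow, map_pow, bind_fA, bind_fA]
      _ = bind₁ (fA A) (∑ l ∈ range (m + 1), monomial (D m l) (T m B l j)) := by
          rw [expand m B hj]
      _ = ∑ l ∈ range (m + 1), C (T m B l j) * ((fA A 0) ^ l * (fA A 1) ^ (m - l)) := by
          rw [map_sum]
          refine Finset.sum_congr rfl fun l hl => ?_
          rw [D, mono_eq, _root_.map_mul, _root_.map_mul, bind₁_C_right, map_pow, map_pow,
            bind₁_X_right, bind₁_X_right, mul_assoc]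
      _ = ∑ l ∈ range (m + 1), ∑ i ∈ range (m + 1), monomial (D m i) (T m B l j * T m A i l) := by
          refine Finset.sum_congr rfl fun l hl => ?_
          rw [expand m A (by simp only [mem_range] at hl; omega), Finset.mul_sum]
          refine Finset.sum_congr rfl fun i _ => ?_
          rw [C_mul_monomial]
      _ = ∑ i ∈ range (m + 1), monomial (D m i) (∑ l ∈ range (m + 1), T m A i l * T m B l j) := by
          rw [Finset.sum_comm]
          refine Finset.sum_congr rfl fun i _ => ?_
          rw [← map_sum]
          congr 1
          exact Finset.sum_congr rfl fun l _ => mul_comm _ _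
  exact extract h1 hk

lemma T_one (m : ℕ) {k j : ℕ} (hk : k ≤ m) (hj : j ≤ m) :
    T m (1 : Matrix (Fin 2) (Fin 2) ℂ) k j = if k = j then 1 else 0 := by
  have e00 : (1 : Matrix (Fin 2) (Fin 2) ℂ) 0 0 = 1 := by simp
  have e10 : (1 : Matrix (Fin 2) (Fin 2) ℂ) 1 0 = 0 := by simp [Matrix.one_apply]
  have e01 : (1 : Matrix (Fin 2) (Fin 2) ℂ) 0 1 = 0 := by simp [Matrix.one_apply]
  have e11 : (1 : Matrix (Fin 2) (Fin 2) ℂ) 1 1 = 1 := by simp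
  rw [T]
  by_cases hkj : k = j
  · subst hkj
    rw [if_pos rfl, Finset.sum_eq_single k]
    · simp [e00, e11, e10, e01, Nat.sub_self]
    · intro p hp hpk
      simp only [mem_Icc, min_self] at hp
      have hlt : k - p ≠ 0 := by omega
      simp [e00, e01, e10, e11, zero_pow hlt]
    · intro h
      exact absurd (by simp only [mem_Icc, min_self]; omega) h
  · rw [if_neg hkj]
    apply Finset.sum_eq_zero
    intro p hp
    simp only [mem_Icc, le_min_iff] at hp
    have hcase : j - p ≠ 0 ∨ k - p ≠ 0 := by omega
    rcases hcase with h | h <;> simp [e00, e01, e10, e11, zero_pow h]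

end SmAux

lemma Sm_eq (m : ℕ) (A : Matrix (Fin 2) (Fin 2) ℂ) (k j : Fin (m + 1)) :
    Sm m A k j =
      ((Real.sqrt ((Nat.factorial (k : ℕ) * Nat.factorial (m - (k : ℕ)) : ℝ) /
        (Nat.factorial (j : ℕ) * Nat.factorial (m - (j : ℕ)))) : ℝ) : ℂ) *
        SmAux.T m A (k : ℕ) (j : ℕ) := rfl
end

lemma sqrt_tel (x y z : ℝ) (hx : 0 ≤ x) (hy : 0 < y) (hz : 0 < z) :
    Real.sqrt (x / y) = Real.sqrt (x / z) * Real.sqrt (z / y) := by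
  rw [← Real.sqrt_mul (by positivity)]
  congr 1
  field_simp

/-- `S_m` is multiplicative: it is a monoid homomorphism from `2×2` complex matrices to
`(m+1)×(m+1)` complex matrices. -/
theorem stmt5 (m : ℕ) :
    Sm m 1 = 1 ∧ ∀ A B : Matrix (Fin 2) (Fin 2) ℂ, Sm m (A * B) = Sm m A * Sm m B := by
  have hw : ∀ i : ℕ, (0 : ℝ) < (Nat.factorial i : ℝ) * (Nat.factorial (m - i) : ℝ) := by
    intro i
    positivity
  constructor
  · ext k j
    have hk : (k : ℕ) ≤ m := Nat.lt_succ_iff.mp k.isLt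
    have hj : (j : ℕ) ≤ m := Nat.lt_succ_iff.mp j.isLt
    rw [Sm_eq, SmAux.T_one m hk hj, Matrix.one_apply]
    by_cases h : k = j
    · subst h
      rw [if_pos rfl, if_pos rfl, div_self (ne_of_gt (hw k)), Real.sqrt_one, mul_one]
      norm_num
    · have h' : (k : ℕ) ≠ (j : ℕ) := fun hh => h (Fin.ext hh)
      rw [if_neg h', if_neg h, mul_zero]
  · intro A B
    ext k j
    have hk : (k : ℕ) ≤ m := Nat.lt_succ_iff.mp k.isLt
    have hj : (j : ℕ) ≤ m := Nat.lt_succ_iff.mp j.isLt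
    rw [Matrix.mul_apply]
    simp only [Sm_eq]
    rw [SmAux.T_mul m A B hk hj, Finset.mul_sum,
      Fin.sum_univ_eq_sum_range (fun i =>
        ((Real.sqrt ((Nat.factorial (k : ℕ) * Nat.factorial (m - (k : ℕ)) : ℝ) /
          (Nat.factorial i * Nat.factorial (m - i))) : ℝ) : ℂ) * SmAux.T m A (k : ℕ) i *
        (((Real.sqrt ((Nat.factorial i * Nat.factorial (m - i) : ℝ) /
          (Nat.factorial (j : ℕ) * Nat.factorial (m - (j : ℕ)))) : ℝ) : ℂ) *
          SmAux.T m B i (j : ℕ)))]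
    refine Finset.sum_congr rfl fun i hi => ?_
    rw [sqrt_tel _ _ ((Nat.factorial i : ℝ) * (Nat.factorial (m - i) : ℝ))
      (le_of_lt (hw _)) (hw _) (hw _), Complex.ofReal_mul]
    ring
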